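/- Let q = 2^l with l ≥ 2. Then the rate of the Hermitian-lifted code C_q (its F_{q^2}-dimension divided by its length q^3) is at least 0.007. -/

import Mathlib

open Finset Polynomial


open Finset Polynomial

private lemma choose_split (m n k : ℕ) :
    Nat.choose n k ≡ Nat.choose (n / 2 ^ m) (k / 2 ^ m) *
      Nat.choose (n % 2 ^ m) (k % 2 ^ m) [MOD 2] := by
  haveI : Fact (Nat.Prime 2) := ⟨Nat.prime_two⟩
  induction m generalizing n k with
  | zero => simp [Nat.mod_one]; rfl
  | succ m ih =>
    have step : ∀ n' k' : ℕ, Nat.choose n' k' ≡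
        Nat.choose (n' % 2) (k' % 2) * Nat.choose (n' / 2) (k' / 2) [MOD 2] :=
      fun n' k' => Choose.choose_modEq_choose_mod_mul_choose_div_nat (p := 2)
    calc Nat.choose n k
        ≡ Nat.choose (n % 2) (k % 2) * Nat.choose (n / 2) (k / 2) [MOD 2] := step n k
      _ ≡ Nat.choose (n % 2) (k % 2) *
            (Nat.choose (n / 2 / 2 ^ m) (k / 2 / 2 ^ m) *
             Nat.choose (n / 2 % 2 ^ m) (k / 2 % 2 ^ m)) [MOD 2] :=
          Nat.ModEq.mul_left _ (ih (n / 2) (k / 2))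
      _ ≡ Nat.choose (n / 2 ^ (m + 1)) (k / 2 ^ (m + 1)) *
            Nat.choose (n % 2 ^ (m + 1)) (k % 2 ^ (m + 1)) [MOD 2] := by
          have hn : n / 2 / 2 ^ m = n / 2 ^ (m + 1) := by
            rw [Nat.div_div_eq_div_mul, pow_succ, mul_comm]
          have hk : k / 2 / 2 ^ m = k / 2 ^ (m + 1) := by
            rw [Nat.div_div_eq_div_mul, pow_succ, mul_comm]
          have hn2 : (n % 2 ^ (m + 1)) % 2 = n % 2 := by
            rw [Nat.mod_mod_of_dvd _ (dvd_pow_self 2 (Nat.succ_ne_zero m))]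
          have hk2 : (k % 2 ^ (m + 1)) % 2 = k % 2 := by
            rw [Nat.mod_mod_of_dvd _ (dvd_pow_self 2 (Nat.succ_ne_zero m))]
          have hn3 : (n % 2 ^ (m + 1)) / 2 = n / 2 % 2 ^ m := by
            rw [pow_succ, mul_comm, Nat.mod_mul_right_div_self]
          have hk3 : (k % 2 ^ (m + 1)) / 2 = k / 2 % 2 ^ m := by
            rw [pow_succ, mul_comm, Nat.mod_mul_right_div_self]
          have := (step (n % 2 ^ (m + 1)) (k % 2 ^ (m + 1))).symm
          rw [hn2, hk2, hn3, hk3] at this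
          calc Nat.choose (n % 2) (k % 2) *
                (Nat.choose (n / 2 / 2 ^ m) (k / 2 / 2 ^ m) *
                 Nat.choose (n / 2 % 2 ^ m) (k / 2 % 2 ^ m))
              ≡ Nat.choose (n / 2 ^ (m + 1)) (k / 2 ^ (m + 1)) *
                (Nat.choose (n % 2) (k % 2) * Nat.choose (n / 2 % 2 ^ m) (k / 2 % 2 ^ m))
                [MOD 2] := by rw [hn, hk]; ring_nf; rfl
            _ ≡ Nat.choose (n / 2 ^ (m + 1)) (k / 2 ^ (m + 1)) *
                Nat.choose (n % 2 ^ (m + 1)) (k % 2 ^ (m + 1)) [MOD 2] :=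
                Nat.ModEq.mul_left _ this

/-- even upstairs + odd binomial forces even downstairs -/
private lemma even_of_odd_choose {n k : ℕ} (hn : 2 ∣ n) (h : ¬ 2 ∣ Nat.choose n k) :
    2 ∣ k ∧ k ≤ n := by
  haveI : Fact (Nat.Prime 2) := ⟨Nat.prime_two⟩
  have hle : k ≤ n := by
    by_contra hlt
    exact h ⟨0, by rw [Nat.choose_eq_zero_of_lt (by omega)]⟩
  refine ⟨?_, hle⟩
  by_contra hk
  have step := Choose.choose_modEq_choose_mod_mul_choose_div_nat (p := 2) (n := n) (k := k)
  have hn2 : n % 2 = 0 := by omega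
  have hk2 : k % 2 = 1 := by omega
  rw [hn2, hk2] at step
  simp [Nat.choose] at step
  exact h ((Nat.modEq_zero_iff_dvd).mp step)


private lemma good_of_family {l : ℕ} (hl : 2 ≤ l) {a bL bH i j : ℕ}
    (ha : 2 ∣ a) (ha' : a < 2 ^ (l - 1)) (hbL : 2 ∣ bL) (hbL' : bL < 2 ^ (l - 1))
    (hbH : 2 ∣ bH) (hbH' : bH < 2 ^ l)
    (hi : i ≤ a)
    (hmod : (i + j) % (2 ^ l + 1) = 2 ^ l) :
    2 ∣ Nat.choose a i * Nat.choose (bH * 2 ^ l + bL) j := by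
  by_contra h
  have h1 : ¬ 2 ∣ Nat.choose a i := fun hd => h (hd.mul_right _)
  have h2 : ¬ 2 ∣ Nat.choose (bH * 2 ^ l + bL) j := fun hd => h (hd.mul_left _)
  obtain ⟨hieven, -⟩ := even_of_odd_choose ha h1
  have hQpos : 0 < 2 ^ l := Nat.pow_pos (by norm_num)
  set jH := j / 2 ^ l with hjH
  set jL := j % 2 ^ l with hjL
  have hsplit := choose_split l (bH * 2 ^ l + bL) j
  have hdiv : (bH * 2 ^ l + bL) / 2 ^ l = bH := by
    rw [mul_comm, Nat.mul_add_div hQpos, Nat.div_eq_of_lt (by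
      calc bL < 2 ^ (l - 1) := hbL'
        _ ≤ 2 ^ l := Nat.pow_le_pow_right (by norm_num) (by omega)), add_zero]
  have hmodb : (bH * 2 ^ l + bL) % 2 ^ l = bL := by
    rw [mul_comm, Nat.mul_add_mod, Nat.mod_eq_of_lt (by
      calc bL < 2 ^ (l - 1) := hbL'
        _ ≤ 2 ^ l := Nat.pow_le_pow_right (by norm_num) (by omega))]
  rw [hdiv, hmodb] at hsplit
  have h2' : ¬ 2 ∣ Nat.choose bH jH * Nat.choose bL jL := fun hd =>
    h2 (Nat.modEq_zero_iff_dvd.mp (hsplit.trans (Nat.modEq_zero_iff_dvd.mpr hd)))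
  have h2a : ¬ 2 ∣ Nat.choose bH jH := fun hd => h2' (hd.mul_right _)
  have h2b : ¬ 2 ∣ Nat.choose bL jL := fun hd => h2' (hd.mul_left _)
  obtain ⟨hjHeven, hjHle⟩ := even_of_odd_choose hbH h2a
  obtain ⟨hjLeven, hjLle⟩ := even_of_odd_choose hbL h2b
  have hP2 : 2 ≤ 2 ^ (l - 1) := by
    calc (2:ℕ) = 2 ^ 1 := rfl
      _ ≤ 2 ^ (l - 1) := Nat.pow_le_pow_right (by norm_num) (by omega)
  have hQP : 2 ^ l = 2 * 2 ^ (l - 1) := by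
    conv_lhs => rw [show l = (l - 1) + 1 by omega]
    rw [pow_succ]; ring
  -- s := i + jL is even and < 2^l
  have hsQ : i + jL < 2 ^ l := by
    have h1 : i + jL ≤ a + bL := Nat.add_le_add hi hjLle
    have h2 : a + bL < 2 ^ (l - 1) + 2 ^ (l - 1) := by omega
    omega
  have hjdecomp : j = jH * 2 ^ l + jL := by rw [hjH, hjL, mul_comm]; exact (Nat.div_add_mod _ _).symm
  have e1 : (i + j + jH) % (2 ^ l + 1) = i + jL := by
    have : i + j + jH = (i + jL) + jH * (2 ^ l + 1) := by rw [hjdecomp]; ring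
    rw [this, Nat.add_mul_mod_self_right, Nat.mod_eq_of_lt (by omega)]
  have e2 : (i + j + jH) % (2 ^ l + 1) = (2 ^ l + jH) % (2 ^ l + 1) := by
    conv_lhs => rw [Nat.add_mod, hmod]
    conv_rhs => rw [Nat.add_mod, Nat.mod_eq_of_lt (show 2 ^ l < 2 ^ l + 1 by omega)]
  rw [e1] at e2
  rcases Nat.eq_zero_or_pos jH with hz | hpos
  · rw [hz, add_zero, Nat.mod_eq_of_lt (by omega)] at e2
    omega
  · have : 2 ^ l + jH = (jH - 1) + 1 * (2 ^ l + 1) := by omega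
    rw [this, Nat.add_mul_mod_self_right, Nat.mod_eq_of_lt (by omega)] at e2
    omega

section FF
variable {F : Type*} [Field F] [Fintype F] [DecidableEq F]

private lemma char_two_of_card {l : ℕ} (hF : Fintype.card F = (2 ^ l) ^ 2) : CharP F 2 := by
  have h1 : CharP F (ringChar F) := ringChar.charP F
  have hp : (ringChar F).Prime := CharP.char_is_prime F (ringChar F)
  obtain ⟨n, -, hcard⟩ := FiniteField.card F (ringChar F)
  rw [hF] at hcard
  have hd : ringChar F ∣ (2 ^ l) ^ 2 := by
    rw [hcard]; exact dvd_pow_self _ (by positivity)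
  have : ringChar F = 2 := by
    have h2 : ringChar F ∣ 2 ^ (2 * l) := by rwa [show 2 ^ (2*l) = (2^l)^2 by ring]
    exact (Nat.prime_dvd_prime_iff_eq hp Nat.prime_two).mp (Nat.Prime.dvd_of_dvd_pow hp h2)
  rwa [this] at h1

private lemma coeffs_eq_zero_of_vanish (s : Finset ℕ) (N : ℕ) (hs : ∀ n ∈ s, n < N)
    (S : Finset F) (hS : N ≤ S.card) (f : ℕ → F)
    (h : ∀ x ∈ S, ∑ n ∈ s, f n * x ^ n = 0) : ∀ n ∈ s, f n = 0 := by
  intro n hn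
  have hN : 0 < N := lt_of_le_of_lt (Nat.zero_le _) (hs n hn)
  set p : F[X] := ∑ m ∈ s, C (f m) * X ^ m with hp
  have hdeg : p.natDegree < N := by
    have : p.natDegree ≤ N - 1 := natDegree_sum_le_of_forall_le _ _ (fun m hm => by
      refine (natDegree_C_mul_le _ _).trans ?_
      simpa using Nat.le_sub_one_of_lt (hs m hm))
    omega
  have hzero : p = 0 := eq_zero_of_natDegree_lt_card_of_eval_eq_zero' p S
    (fun x hx => by
      rw [hp]; simp only [eval_finset_sum, eval_mul, eval_C, eval_pow, eval_X]
      exact h x hx) (lt_of_lt_of_le hdeg hS)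
  have hcoeff := congrArg (fun r : F[X] => r.coeff n) hzero
  simp only [hp, finset_sum_coeff, coeff_C_mul, coeff_X_pow, coeff_zero] at hcoeff
  rwa [Finset.sum_eq_single n (fun m hm hne => by rw [if_neg (fun hh => hne hh.symm), mul_zero])
    (fun hns => absurd hn hns), if_pos rfl, mul_one] at hcoeff

private lemma fiber_card_ge {l q : ℕ} (hl : 2 ≤ l) (hq : q = 2 ^ l)
    (hF : Fintype.card F = q ^ 2) (z : F) (hz : z ^ q + z = 0) :
    q ≤ (univ.filter (fun x : F => x ^ q + x = z)).card := by
  classical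
  haveI : CharP F 2 := char_two_of_card (hq ▸ hF)
  haveI : Fact (Nat.Prime 2) := ⟨Nat.prime_two⟩
  have hq4 : 4 ≤ q := by subst hq; calc (4:ℕ) = 2^2 := rfl
                                      _ ≤ 2^l := Nat.pow_le_pow_right (by norm_num) hl
  have frob : ∀ x y : F, (x + y) ^ q = x ^ q + y ^ q := by
    subst hq; intro x y; exact add_pow_char_pow x y 2 l
  have hx2 : ∀ x : F, x ^ q ^ 2 = x := by
    intro x; rw [← hF]; exact FiniteField.pow_card x
  have h2 : (2 : F) = 0 := CharTwo.two_eq_zero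
  -- upper bound for every fiber
  have bound : ∀ w : F, (univ.filter fun x : F => x ^ q + x = w).card ≤ q := by
    intro w
    set P : F[X] := X ^ q + X + C w with hP
    have hPc : P.coeff q = 1 := by
      simp only [hP, coeff_add, coeff_X_pow, coeff_X, coeff_C, if_pos rfl,
        if_neg (show ¬(1 = q) by omega), if_neg (show ¬(q = 0) by omega), add_zero, if_true]
    have hPne : P ≠ 0 := fun hd => by simp [hd] at hPc
    have hsub : (univ.filter fun x : F => x ^ q + x = w) ⊆ P.roots.toFinset := by
      intro x hx
      simp only [mem_filter, mem_univ, true_and] at hx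
      rw [Multiset.mem_toFinset, mem_roots hPne]
      show P.eval x = 0
      simp only [hP, eval_add, eval_pow, eval_X, eval_C, hx]
      linear_combination w * h2
    calc (univ.filter fun x : F => x ^ q + x = w).card
        ≤ P.roots.toFinset.card := Finset.card_le_card hsub
      _ ≤ Multiset.card P.roots := Multiset.toFinset_card_le _
      _ ≤ P.natDegree := Polynomial.card_roots' P
      _ ≤ q := by
          refine (natDegree_add_le _ _).trans ?_
          simp only [natDegree_C, Nat.max_le, Nat.le_zero]
          constructor
          · refine (natDegree_add_le _ _).trans ?_
            simp [natDegree_X_pow, natDegree_X]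
            omega
          · omega
  set K : Finset F := univ.filter (fun w : F => w ^ q + w = 0) with hK
  have hKcard : K.card ≤ q := bound 0
  have hmapsto : ∀ x : F, x ∈ (univ : Finset F) → x ^ q + x ∈ K := by
    intro x _
    rw [hK, mem_filter]
    refine ⟨mem_univ _, ?_⟩
    have e : (x ^ q + x) ^ q = x ^ (q * q) + x ^ q := by rw [frob, ← pow_mul]
    have e2 : x ^ (q * q) = x := by rw [← pow_two]; exact hx2 x
    rw [e, e2]
    linear_combination (x ^ q + x) * h2
  have htotal : (univ : Finset F).card =
      ∑ w ∈ K, (univ.filter (fun x : F => x ^ q + x = w)).card :=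
    Finset.card_eq_sum_card_fiberwise hmapsto
  by_contra hlt
  push_neg at hlt
  have hzK : z ∈ K := by rw [hK, mem_filter]; exact ⟨mem_univ _, hz⟩
  have : q ^ 2 < q * q := by
    calc q ^ 2 = Fintype.card F := hF.symm
      _ = (univ : Finset F).card := (Finset.card_univ).symm
      _ = ∑ w ∈ K, (univ.filter (fun x : F => x ^ q + x = w)).card := htotal
      _ < ∑ _w ∈ K, q := Finset.sum_lt_sum (fun w _ => bound w) ⟨z, hzK, hlt⟩
      _ = K.card * q := by rw [Finset.sum_const, smul_eq_mul]
      _ ≤ q * q := Nat.mul_le_mul_right _ hKcard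
  rw [pow_two] at this
  exact lt_irrefl _ this
end FF

private lemma monomial_line_restrict {l q : ℕ} (hl : 2 ≤ l) (hq : q = 2 ^ l)
    {F : Type*} [Field F] [Fintype F] (hF : Fintype.card F = q ^ 2)
    (a b : ℕ)
    (hgood : ∀ i j : ℕ, i ≤ a → j ≤ b → (i + j) % (q + 1) = q →
      2 ∣ Nat.choose a i * Nat.choose b j)
    (α β : F) :
    ∃ g : Polynomial F, g.degree ≤ ((q - 1 : ℕ) : WithBot ℕ) ∧
      ∀ t : F, t ^ (q + 1) + α ^ q * t ^ q + α * t + (β + β ^ q) = 0 →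
        (α * t + β) ^ a * t ^ b = g.eval t := by
  haveI : CharP F 2 := by
    have h1 : CharP F (ringChar F) := ringChar.charP F
    have hp : (ringChar F).Prime := CharP.char_is_prime F (ringChar F)
    obtain ⟨n, -, hcard⟩ := FiniteField.card F (ringChar F)
    rw [hF, hq] at hcard
    have hdd : ringChar F ∣ 2 ^ (2 * l) := by
      rw [show 2 ^ (2 * l) = (2 ^ l) ^ 2 by ring, hcard]
      exact dvd_pow_self _ (by positivity)
    have : ringChar F = 2 :=
      (Nat.prime_dvd_prime_iff_eq hp Nat.prime_two).mp (hp.dvd_of_dvd_pow hdd)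
    rwa [this] at h1
  haveI : Fact (Nat.Prime 2) := ⟨Nat.prime_two⟩
  have h2 : (2 : F) = 0 := CharTwo.two_eq_zero
  have hq4 : 4 ≤ q := by
    subst hq
    calc (4 : ℕ) = 2 ^ 2 := rfl
      _ ≤ 2 ^ l := Nat.pow_le_pow_right (by norm_num) hl
  have frob : ∀ x y : F, (x + y) ^ q = x ^ q + y ^ q := by
    subst hq; intro x y; exact add_pow_char_pow x y 2 l
  have hx2 : ∀ x : F, x ^ q ^ 2 = x := by
    intro x; rw [← hF]; exact FiniteField.pow_card x
  set d : F := α ^ (q + 1) + (β + β ^ q) with hd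
  set γ : F := α ^ (q + 1) + β with hγ
  have hαq : (α ^ q) ^ q = α := by rw [← pow_mul, ← pow_two]; exact hx2 α
  have key : ∀ t : F, t ^ (q + 1) + α ^ q * t ^ q + α * t + (β + β ^ q)
      = (t + α ^ q) ^ (q + 1) + d := by
    intro t
    have e1 : (t + α ^ q) ^ (q + 1) = (t ^ q + α) * (t + α ^ q) := by
      rw [pow_succ, frob, hαq]
    rw [e1, hd]
    linear_combination (-(α * α ^ q)) * h2
  have root_iff : ∀ t : F,
      (t ^ (q + 1) + α ^ q * t ^ q + α * t + (β + β ^ q) = 0 ↔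
        (t + α ^ q) ^ (q + 1) = d) := by
    intro t
    rw [key t, CharTwo.add_eq_iff_eq_add, zero_add]
  by_cases hd0 : d = 0
  · -- tangent line: unique root t = α ^ q
    refine ⟨C ((α * α ^ q + β) ^ a * (α ^ q) ^ b), ?_, ?_⟩
    · refine degree_C_le.trans ?_
      exact_mod_cast Nat.zero_le (q - 1)
    · intro t ht
      rw [root_iff] at ht
      rw [hd0] at ht
      have hu : t + α ^ q = 0 := by
        have := pow_eq_zero_iff (n := q + 1) (by omega) |>.mp ht
        exact this
      have htα : t = α ^ q := by
        rw [CharTwo.add_eq_iff_eq_add, zero_add] at hu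
        exact hu
      rw [eval_C, htα]
  · -- generic line with q+1 points
    refine ⟨∑ p ∈ Finset.range (a + 1) ×ˢ Finset.range (b + 1),
      C (((a.choose p.1 * b.choose p.2 : ℕ) : F) * α ^ p.1 * γ ^ (a - p.1) *
          (α ^ q) ^ (b - p.2) * d ^ ((p.1 + p.2) / (q + 1))) *
        (X + C (α ^ q)) ^ ((p.1 + p.2) % (q + 1)), ?_, ?_⟩
    · refine (degree_sum_le _ _).trans (Finset.sup_le fun p hp => ?_)
      simp only [Finset.mem_product, Finset.mem_range] at hp
      by_cases hmod : (p.1 + p.2) % (q + 1) = q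
      · obtain ⟨k, hk⟩ := hgood p.1 p.2 (by omega) (by omega) hmod
        have hcast : ((a.choose p.1 * b.choose p.2 : ℕ) : F) = 0 := by
          rw [hk]; push_cast; rw [h2]; ring
        rw [hcast]
        simp only [zero_mul, map_zero]
        exact bot_le
      · have hle : (p.1 + p.2) % (q + 1) ≤ q - 1 := by
          have := Nat.mod_lt (p.1 + p.2) (show 0 < q + 1 by omega)
          omega
        refine (degree_mul_le _ _).trans ?_
        have hd1 : degree ((X + C (α ^ q)) ^ ((p.1 + p.2) % (q + 1))) ≤
            (((p.1 + p.2) % (q + 1) : ℕ) : WithBot ℕ) := by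
          refine degree_le_natDegree.trans ?_
          rw [natDegree_pow, natDegree_X_add_C, mul_one]
        calc degree (C _) + degree ((X + C (α ^ q)) ^ ((p.1 + p.2) % (q + 1)))
            ≤ 0 + (((p.1 + p.2) % (q + 1) : ℕ) : WithBot ℕ) := add_le_add degree_C_le hd1
          _ = (((p.1 + p.2) % (q + 1) : ℕ) : WithBot ℕ) := zero_add _
          _ ≤ ((q - 1 : ℕ) : WithBot ℕ) := by exact_mod_cast hle
    · intro t ht
      rw [root_iff] at ht
      set u : F := t + α ^ q with hu
      have hu_pow : ∀ k : ℕ, d ^ (k / (q + 1)) * u ^ (k % (q + 1)) = u ^ k := by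
        intro k
        rw [← ht, ← pow_mul, ← pow_add, Nat.div_add_mod]
      have hαβ : α * t + β = α * u + γ := by
        rw [hu, hγ]; linear_combination (-(α * α ^ q)) * h2
      have htu : t = u + α ^ q := by
        rw [hu]; linear_combination (-(α ^ q)) * h2
      rw [hαβ]
      conv_lhs => rw [htu]
      rw [add_pow (α * u) γ a, add_pow u (α ^ q) b, Finset.sum_mul_sum]
      rw [eval_finset_sum]
      rw [← Finset.sum_product']
      refine Finset.sum_congr rfl fun p hp => ?_
      simp only [eval_mul, eval_C, eval_pow, eval_add, eval_X, ← hu]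
      calc (α * u) ^ p.1 * γ ^ (a - p.1) * ↑(a.choose p.1) *
              (u ^ p.2 * (α ^ q) ^ (b - p.2) * ↑(b.choose p.2))
          = (((a.choose p.1 * b.choose p.2 : ℕ) : F) * α ^ p.1 * γ ^ (a - p.1) *
              (α ^ q) ^ (b - p.2)) * u ^ (p.1 + p.2) := by rw [mul_pow]; push_cast; ring
        _ = (((a.choose p.1 * b.choose p.2 : ℕ) : F) * α ^ p.1 * γ ^ (a - p.1) *
              (α ^ q) ^ (b - p.2)) * (d ^ ((p.1 + p.2) / (q + 1)) *
              u ^ ((p.1 + p.2) % (q + 1))) := by rw [hu_pow]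
        _ = _ := by ring


set_option maxHeartbeats 1000000 in
/-- For `q = 2^l` with `l ≥ 2`, the rate of the Hermitian-lifted code `C_q`
(its `F_{q^2}`-dimension divided by its length `q^3`) is at least `0.007`. -/
theorem hermitian_lifted_code_rate_two (l q : ℕ) (hl : 2 ≤ l) (hq : q = 2 ^ l)
    (F : Type*) [Field F] [Fintype F] (hF : Fintype.card F = q ^ 2) :
    (0.007 : ℝ) ≤
      (Module.finrank F (Submodule.span F
        {v : {pt : F × F // pt.1 ^ q + pt.1 + pt.2 ^ (q + 1) = 0} → F |
          ∃ f : MvPolynomial (Fin 2) F,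
            (∀ α β : F, ∃ g : Polynomial F, g.degree ≤ ((q - 1 : ℕ) : WithBot ℕ) ∧
              ∀ t : F, t ^ (q + 1) + α ^ q * t ^ q + α * t + (β + β ^ q) = 0 →
                MvPolynomial.eval ![α * t + β, t] f = g.eval t) ∧
            ∀ P, v P = MvPolynomial.eval ![P.1.1, P.1.2] f}) : ℝ) / q ^ 3 := by
  classical
  haveI : CharP F 2 := char_two_of_card (hq ▸ hF)
  have h2 : (2 : F) = 0 := CharTwo.two_eq_zero
  have hq4 : 4 ≤ q := by
    subst hq
    calc (4 : ℕ) = 2 ^ 2 := rfl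
      _ ≤ 2 ^ l := Nat.pow_le_pow_right (by norm_num) hl
  have hpow1 : 2 ^ (l - 1) = 2 * 2 ^ (l - 2) := by
    conv_lhs => rw [show l - 1 = (l - 2) + 1 by omega]
    rw [pow_succ]; ring
  have hpow0 : q = 2 * 2 ^ (l - 1) := by
    conv_lhs => rw [hq, show l = (l - 1) + 1 by omega]
    rw [pow_succ]; ring
  -- the point type
  set PT := {pt : F × F // pt.1 ^ q + pt.1 + pt.2 ^ (q + 1) = 0} with hPT
  -- the code (as a set of vectors)
  set Sset : Set (PT → F) :=
    {v : PT → F |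
      ∃ f : MvPolynomial (Fin 2) F,
        (∀ α β : F, ∃ g : Polynomial F, g.degree ≤ ((q - 1 : ℕ) : WithBot ℕ) ∧
          ∀ t : F, t ^ (q + 1) + α ^ q * t ^ q + α * t + (β + β ^ q) = 0 →
            MvPolynomial.eval ![α * t + β, t] f = g.eval t) ∧
        ∀ P, v P = MvPolynomial.eval ![P.1.1, P.1.2] f} with hSset
  -- the good monomial exponents
  set sA : Finset ℕ := (Finset.range (2 ^ (l - 2))).image (fun x => 2 * x) with hsA
  set sB : Finset ℕ :=
    ((Finset.range (2 ^ (l - 2))) ×ˢ (Finset.range (2 ^ (l - 1)))).image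
      (fun x => (2 * x.2) * 2 ^ l + 2 * x.1) with hsB
  have hmemA : ∀ a ∈ sA, 2 ∣ a ∧ a < 2 ^ (l - 1) := by
    intro a ha
    rw [hsA, Finset.mem_image] at ha
    obtain ⟨x, hx, rfl⟩ := ha
    rw [Finset.mem_range] at hx
    exact ⟨⟨x, rfl⟩, by omega⟩
  have hmemB : ∀ b ∈ sB, ∃ bH bL, b = bH * 2 ^ l + bL ∧ 2 ∣ bH ∧ bH < 2 ^ l ∧
      2 ∣ bL ∧ bL < 2 ^ (l - 1) := by
    intro b hb
    rw [hsB, Finset.mem_image] at hb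
    obtain ⟨x, hx, rfl⟩ := hb
    rw [Finset.mem_product, Finset.mem_range, Finset.mem_range] at hx
    exact ⟨2 * x.2, 2 * x.1, rfl, ⟨x.2, rfl⟩, by omega, ⟨x.1, rfl⟩, by omega⟩
  have hAlt : ∀ a ∈ sA, a < q := by
    intro a ha; have := (hmemA a ha).2; omega
  have hBlt : ∀ b ∈ sB, b < q ^ 2 := by
    intro b hb
    obtain ⟨bH, bL, rfl, -, hbH, -, hbL⟩ := hmemB b hb
    have : bH * 2 ^ l + bL ≤ (2 ^ l - 1) * 2 ^ l + (2 ^ l - 1) := by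
      have h1 : bH ≤ 2 ^ l - 1 := by omega
      have h2 : bL ≤ 2 ^ l - 1 := by omega
      exact Nat.add_le_add (Nat.mul_le_mul_right _ h1) h2
    have hqq : q ^ 2 = 2 ^ l * 2 ^ l := by rw [hq]; ring
    have hpos : 0 < 2 ^ l := Nat.pow_pos (by norm_num)
    have hle : 2 ^ l ≤ 2 ^ l * 2 ^ l := Nat.le_mul_of_pos_left _ hpos
    calc bH * 2 ^ l + bL ≤ (2 ^ l - 1) * 2 ^ l + (2 ^ l - 1) := this
      _ < 2 ^ l * 2 ^ l := by
          rw [Nat.sub_one_mul]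
          omega
      _ = q ^ 2 := hqq.symm
  -- goodness of all pairs in sA ×ˢ sB
  have hgood : ∀ p ∈ sA ×ˢ sB, ∀ i j : ℕ, i ≤ p.1 → j ≤ p.2 →
      (i + j) % (q + 1) = q → 2 ∣ Nat.choose p.1 i * Nat.choose p.2 j := by
    intro p hp i j hi _ hmod
    rw [Finset.mem_product] at hp
    obtain ⟨h2a, ha⟩ := hmemA p.1 hp.1
    obtain ⟨bH, bL, hb, h2H, hH, h2L, hL⟩ := hmemB p.2 hp.2
    rw [hb]
    rw [hq] at hmod
    exact good_of_family hl h2a ha h2L hL h2H hH hi hmod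
  -- the monomial vectors
  set w : ℕ × ℕ → (PT → F) := fun p P => P.1.1 ^ p.1 * P.1.2 ^ p.2 with hw
  -- each monomial vector is in the code
  have hmem : ∀ p ∈ sA ×ˢ sB, w p ∈ Sset := by
    intro p hp
    refine ⟨MvPolynomial.X 0 ^ p.1 * MvPolynomial.X 1 ^ p.2, ?_, ?_⟩
    · intro α β
      obtain ⟨g, hg1, hg2⟩ := monomial_line_restrict hl hq hF p.1 p.2 (hgood p hp) α β
      refine ⟨g, hg1, fun t ht => ?_⟩
      rw [← hg2 t ht]
      simp [MvPolynomial.eval_X]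
    · intro P
      simp [hw, MvPolynomial.eval_X]
  -- linear independence
  have hLI : LinearIndependent F (fun p : ↥(sA ×ˢ sB) => w p.1) := by
    rw [Fintype.linearIndependent_iff]
    intro g hg i
    set c : ℕ × ℕ → F := fun p => if h : p ∈ sA ×ˢ sB then g ⟨p, h⟩ else 0 with hc
    have hgc : ∀ i : ↥(sA ×ˢ sB), g i = c i.1 := by
      intro i; rw [hc]; simp [i.2]
    -- pointwise vanishing
    have hsum : ∀ P : PT, ∑ p ∈ sA ×ˢ sB, c p * (P.1.1 ^ p.1 * P.1.2 ^ p.2) = 0 := by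
      intro P
      have := congrFun hg P
      simp only [Finset.sum_apply, Pi.smul_apply, Pi.zero_apply, smul_eq_mul] at this
      calc ∑ p ∈ sA ×ˢ sB, c p * (P.1.1 ^ p.1 * P.1.2 ^ p.2)
          = ∑ i : ↥(sA ×ˢ sB), c i.1 * (P.1.1 ^ i.1.1 * P.1.2 ^ i.1.2) :=
            (Finset.sum_coe_sort (sA ×ˢ sB) (fun p => c p * (P.1.1 ^ p.1 * P.1.2 ^ p.2))).symm
        _ = ∑ i : ↥(sA ×ˢ sB), g i * (w i.1) P := by
            refine Finset.sum_congr rfl fun i _ => ?_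
            rw [hgc i, hw]
        _ = 0 := this
    -- step A: for every y0, the a-coefficients vanish
    have stepA : ∀ y0 : F, ∀ a ∈ sA, ∑ b ∈ sB, c (a, b) * y0 ^ b = 0 := by
      intro y0
      have hz : (y0 ^ (q + 1)) ^ q + y0 ^ (q + 1) = 0 := by
        have e : (y0 ^ (q + 1)) ^ q = y0 ^ (q + 1) := by
          rw [← pow_mul]
          have e2 : (q + 1) * q = q ^ 2 + q := by ring
          rw [e2, pow_add]
          have e3 : y0 ^ q ^ 2 = y0 := by rw [← hF]; exact FiniteField.pow_card y0
          rw [e3, ← pow_succ']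
        rw [e]
        exact CharTwo.add_self_eq_zero _
      refine coeffs_eq_zero_of_vanish sA q hAlt
        (univ.filter (fun x : F => x ^ q + x = y0 ^ (q + 1)))
        (fiber_card_ge hl hq hF _ hz) _ (fun x hx => ?_)
      rw [Finset.mem_filter] at hx
      have hcurve : x ^ q + x + y0 ^ (q + 1) = 0 := by
        rw [hx.2]; exact CharTwo.add_self_eq_zero _
      have := hsum ⟨(x, y0), hcurve⟩
      rw [Finset.sum_product] at this
      rw [← this]
      refine Finset.sum_congr rfl fun a _ => ?_
      rw [Finset.sum_mul]
      exact Finset.sum_congr rfl fun b _ => by ring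
    -- step B: all coefficients vanish
    have stepB : ∀ a ∈ sA, ∀ b ∈ sB, c (a, b) = 0 := by
      intro a ha
      refine coeffs_eq_zero_of_vanish sB (q ^ 2) hBlt univ (by rw [Finset.card_univ, hF]) _
        (fun y0 _ => stepA y0 a ha)
    have hi2 := Finset.mem_product.mp i.2
    rw [hgc i]
    exact stepB i.1.1 hi2.1 i.1.2 hi2.2
  -- cardinality of the family
  have hcardA : sA.card = 2 ^ (l - 2) := by
    rw [hsA, Finset.card_image_of_injective _ (fun x y h => by omega), Finset.card_range]
  have hcardB : sB.card = 2 ^ (l - 2) * 2 ^ (l - 1) := by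
    rw [hsB, Finset.card_image_of_injOn, Finset.card_product, Finset.card_range,
      Finset.card_range]
    intro x hx y hy hxy
    simp only [Finset.mem_coe, Finset.mem_product, Finset.mem_range] at hx hy
    have hxl : 2 * x.1 < 2 ^ l := by
      have : (2:ℕ) ^ (l - 2) ≤ 2 ^ l := Nat.pow_le_pow_right (by norm_num) (by omega)
      omega
    have hyl : 2 * y.1 < 2 ^ l := by
      have : (2:ℕ) ^ (l - 2) ≤ 2 ^ l := Nat.pow_le_pow_right (by norm_num) (by omega)
      omega
    have hdx := congrArg (fun v => v / 2 ^ l) hxy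
    have hmx := congrArg (fun v => v % 2 ^ l) hxy
    have hpos : 0 < 2 ^ l := Nat.pow_pos (by norm_num)
    simp only [mul_comm _ (2 ^ l)] at hdx hmx
    rw [Nat.mul_add_div hpos, Nat.mul_add_div hpos, Nat.div_eq_of_lt hxl,
      Nat.div_eq_of_lt hyl] at hdx
    rw [Nat.mul_add_mod, Nat.mul_add_mod, Nat.mod_eq_of_lt hxl, Nat.mod_eq_of_lt hyl] at hmx
    have : x.1 = y.1 := by omega
    have : x.2 = y.2 := by omega
    exact Prod.ext ‹x.1 = y.1› ‹x.2 = y.2›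
  -- finrank bound
  have hrange : Set.range (fun p : ↥(sA ×ˢ sB) => w p.1) ⊆ Sset := by
    rintro _ ⟨i, rfl⟩
    exact hmem i.1 i.2
  have hspan : Submodule.span F (Set.range (fun p : ↥(sA ×ˢ sB) => w p.1)) ≤
      Submodule.span F Sset := Submodule.span_mono hrange
  have hfr1 : Module.finrank F (Submodule.span F
      (Set.range (fun p : ↥(sA ×ˢ sB) => w p.1))) = (sA ×ˢ sB).card := by
    rw [finrank_span_eq_card hLI, Fintype.card_coe]
  have hfr : (sA ×ˢ sB).card ≤ Module.finrank F (Submodule.span F Sset) := by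
    rw [← hfr1]
    exact Submodule.finrank_mono hspan
  rw [Finset.card_product, hcardA, hcardB] at hfr
  -- numerics
  have hcount : 2 ^ (3 * l - 5) ≤ Module.finrank F (Submodule.span F Sset) := by
    refine le_trans (le_of_eq ?_) hfr
    rw [← pow_add, ← pow_add]
    congr 1
    omega
  have hqr : ((q : ℝ)) ^ 3 = 2 ^ (3 * l) := by
    rw [hq]; push_cast; rw [← pow_mul]; ring_nf
  have hpos3 : (0 : ℝ) < (q : ℝ) ^ 3 := by
    have : (0:ℝ) < (q:ℝ) := by exact_mod_cast (by omega : 0 < q)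
    positivity
  rw [le_div_iff₀ hpos3]
  have hc : (2:ℝ) ^ (3 * l - 5) ≤ (Module.finrank F (Submodule.span F Sset) : ℝ) := by
    have := (Nat.cast_le (α := ℝ)).mpr hcount
    push_cast at this
    exact this
  calc (0.007:ℝ) * (q:ℝ) ^ 3 ≤ (1/32) * (q:ℝ) ^ 3 := by
        have h32 : (0.007:ℝ) ≤ 1/32 := by norm_num
        exact mul_le_mul_of_nonneg_right h32 (le_of_lt hpos3)
    _ = (2:ℝ) ^ (3 * l - 5) := by
        rw [hqr, show 3 * l = (3 * l - 5) + 5 by omega, pow_add]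
        norm_num
        ring
    _ ≤ _ := hc
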